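/- Take J = [r]×[r] and suppose every matricially free creation operator is standard. Let F be the full Fock space over I = [r]×[r]×L, with free creation operators ℓ(p,q,l) := ℓ((p,q,l)), and let F^{⊕r} be the Hilbert direct sum of r copies of F. For p,q ∈ [r] and l ∈ L, let L_{p,q}(l) be the bounded operator on F^{⊕r} sending (ξ₁,…,ξ_r) to the tuple having ℓ(p,q,l)ξ_q in position p and 0 in all other positions. Then there exists a linear isometry τ : M → F^{⊕r} such that τ(Ω_q) = (the tuple with δ_Ω in position q and 0 elsewhere) for every q ∈ [r], and τ ∘ ℘_{p,q}(l) = L_{p,q}(l) ∘ τ for all p,q ∈ [r] and l ∈ L. -/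

import Mathlib

noncomputable section

/-- A letter of a word in the matricially free Fock space of tracial type. -/
abbrev MLetter (r : ℕ) (L : Type*) := (Fin r × Fin r) × L

/-- A finite nonempty chained word with letters in `J × L`. -/
structure MWord (r : ℕ) (J : Set (Fin r × Fin r)) (L : Type*) where
  head : MLetter r L
  tail : List (MLetter r L)
  headJ : head.1 ∈ J
  tailJ : ∀ x ∈ tail, x.1 ∈ J
  chain : List.Chain' (fun a b : MLetter r L => a.1.2 = b.1.1) (head :: tail)

/-- Canonical orthonormal basis index set: vacua `Ω₁,…,Ω_r` and the words. -/
abbrev MBasis (r : ℕ) (J : Set (Fin r × Fin r)) (L : Type*) := (Fin r) ⊕ (MWord r J L)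

/-- The matricially free Fock space of tracial type, `ℓ²` of the basis set. -/
abbrev MSpace (r : ℕ) (J : Set (Fin r × Fin r)) (L : Type*) :=
  lp (fun _ : MBasis r J L => ℂ) 2

/-- Canonical basis vector. -/
def mvec {r : ℕ} {J : Set (Fin r × Fin r)} {L : Type*} (i : MBasis r J L) : MSpace r J L := by
  classical exact lp.single 2 i 1

/-- The vacuum vector `Ω_q`. -/
def vac {r : ℕ} {J : Set (Fin r × Fin r)} {L : Type*} (q : Fin r) : MSpace r J L :=
  mvec (Sum.inl q)

/-- Basis vector of a word. -/
def wvec {r : ℕ} {J : Set (Fin r × Fin r)} {L : Type*} (w : MWord r J L) : MSpace r J L :=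
  mvec (Sum.inr w)

/-- The single-letter word. -/
def MWord.single {r : ℕ} {J : Set (Fin r × Fin r)} {L : Type*}
    (x : MLetter r L) (hx : x.1 ∈ J) : MWord r J L :=
  ⟨x, [], hx, (by intro y hy; cases hy), List.isChain_singleton _⟩

/-- Prepending a letter to a word. -/
def MWord.cons {r : ℕ} {J : Set (Fin r × Fin r)} {L : Type*}
    (x : MLetter r L) (hx : x.1 ∈ J) (w : MWord r J L)
    (hc : x.1.2 = w.head.1.1) : MWord r J L :=
  ⟨x, w.head :: w.tail, hx, by
      intro y hy
      rcases List.mem_cons.mp hy with h | h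
      · exact h ▸ w.headJ
      · exact w.tailJ y h,
    List.isChain_cons_cons.mpr ⟨hc, w.chain⟩⟩

/-- `T` is the matricially free creation operator `℘_{p,q}(l)` with covariance `b`:
it maps `Ω_q` to `√b·((p,q,l))`, each word starting with first index `q` to `√b` times the
word with `((p,q),l)` prepended, and all other canonical basis vectors to `0`. -/
def IsMFCreation {r : ℕ} {J : Set (Fin r × Fin r)} {L : Type*}
    (b : ℝ) (p q : Fin r) (l : L) (hpq : ((p, q) : Fin r × Fin r) ∈ J)
    (T : MSpace r J L →L[ℂ] MSpace r J L) : Prop :=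
  T (vac q) = (Real.sqrt b : ℂ) • wvec (MWord.single ((p, q), l) hpq) ∧
  (∀ q' : Fin r, q' ≠ q → T (vac q') = 0) ∧
  (∀ (w : MWord r J L) (h : w.head.1.1 = q),
      T (wvec w) = (Real.sqrt b : ℂ) • wvec (MWord.cons ((p, q), l) hpq w h.symm)) ∧
  (∀ w : MWord r J L, w.head.1.1 ≠ q → T (wvec w) = 0)

/-- The vector state `Ψ_q(a) = ⟨aΩ_q, Ω_q⟩`. -/
def PsiM {r : ℕ} {J : Set (Fin r × Fin r)} {L : Type*} (q : Fin r)
    (a : MSpace r J L →L[ℂ] MSpace r J L) : ℂ :=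
  @inner ℂ _ _ (vac q : MSpace r J L) (a (vac q))

end
noncomputable section

/-- Basis index set of the full Fock space over `I`: the vacuum and the nonempty words. -/
abbrev FBasis (I : Type*) := Unit ⊕ {w : List I // w ≠ []}

/-- The full Fock space over `I`, `ℓ²` of its canonical basis set. -/
abbrev FSpace (I : Type*) := lp (fun _ : FBasis I => ℂ) 2

/-- Canonical basis vector of the full Fock space. -/
def fvec {I : Type*} (i : FBasis I) : FSpace I := by
  classical exact lp.single 2 i 1

/-- The vacuum vector `δ_Ω`. -/
def fvac {I : Type*} : FSpace I := fvec (Sum.inl ())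

/-- The basis vector `δ_w` of a nonempty word `w`. -/
def fword {I : Type*} (w : List I) (hw : w ≠ []) : FSpace I := fvec (Sum.inr ⟨w, hw⟩)

/-- `T` is the free creation operator `ℓ(i)`: it sends `δ_Ω` to `δ_{(i)}` and each
word basis vector `δ_w` to `δ_{i·w}`. -/
def IsFreeCreation {I : Type*} (i : I) (T : FSpace I →L[ℂ] FSpace I) : Prop :=
  T fvac = fword [i] (by simp) ∧
  ∀ (w : List I) (hw : w ≠ []), T (fword w hw) = fword (i :: w) (by simp)

/-- The vacuum state `φ(a) = ⟨aδ_Ω, δ_Ω⟩` on the full Fock space. -/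
def fockState {I : Type*} (a : FSpace I →L[ℂ] FSpace I) : ℂ :=
  @inner ℂ _ _ (fvac : FSpace I) (a fvac)

/-- The Hilbert direct sum `F^{⊕r}` of `r` copies of the full Fock space. -/
abbrev FockR (r : ℕ) (I : Type*) := PiLp 2 (fun _ : Fin r => FSpace I)

/-- Tuple constructor for `F^{⊕r}`. -/
def tupOf {r : ℕ} {I : Type*} (f : Fin r → FSpace I) : FockR r I :=
  (WithLp.equiv 2 (∀ _ : Fin r, FSpace I)).symm f

/-- Component of an element of `F^{⊕r}`. -/
def tupComp {r : ℕ} {I : Type*} (ξ : FockR r I) (k : Fin r) : FSpace I :=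
  (WithLp.equiv 2 (∀ _ : Fin r, FSpace I)) ξ k

/-- `δ^{(q)}`, the tuple with `δ_Ω` in position `q` and `0` elsewhere. -/
def fockDelta {r : ℕ} {I : Type*} (q : Fin r) : FockR r I :=
  tupOf (fun k => if k = q then fvac else 0)

/-- The state `Φ_k(x) = ⟨x δ^{(k)}, δ^{(k)}⟩` on the bounded operators on `F^{⊕r}`. -/
def PhiR {r : ℕ} {I : Type*} (k : Fin r) (x : FockR r I →L[ℂ] FockR r I) : ℂ :=
  @inner ℂ _ _ (fockDelta k : FockR r I) (x (fockDelta k))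

end

noncomputable section AuxMF

open scoped ComplexOrder

namespace MFAux

open scoped Classical

variable {r : ℕ} {L : Type}

/-- Reassociating a letter. -/
def convL (r : ℕ) (L : Type) (x : MLetter r L) : Fin r × Fin r × L := (x.1.1, x.1.2, x.2)

lemma convL_injective : Function.Injective (convL r L) := by
  rintro ⟨⟨a, b⟩, l⟩ ⟨⟨a', b'⟩, l'⟩ h
  simp only [convL, Prod.mk.injEq] at h
  simp [Prod.ext_iff, h.1, h.2.1, h.2.2]

/-- The list of letters of a word, reassociated. -/
def listOf {J : Set (Fin r × Fin r)} (w : MWord r J L) : List (Fin r × Fin r × L) :=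
  (w.head :: w.tail).map (convL r L)

lemma listOf_ne_nil {J : Set (Fin r × Fin r)} (w : MWord r J L) : listOf w ≠ [] := by
  simp [listOf]

/-- Embedding of the matricial basis into the basis of `F^{⊕r}`. -/
def embB (i : MBasis r (Set.univ) L) : Fin r × FBasis (Fin r × Fin r × L) :=
  match i with
  | Sum.inl q => (q, Sum.inl ())
  | Sum.inr w => (w.head.1.1, Sum.inr ⟨listOf w, listOf_ne_nil w⟩)

lemma embB_injective : Function.Injective (embB (r := r) (L := L)) := by
  rintro (q | w) (q' | w') h
  · simp only [embB, Prod.mk.injEq] at h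
    exact congrArg Sum.inl h.1
  · exact absurd (congrArg Prod.snd h) (by simp [embB])
  · exact absurd (congrArg Prod.snd h) (by simp [embB])
  · have h2 := congrArg Prod.snd h
    simp only [embB, Sum.inr.injEq, Subtype.mk.injEq] at h2
    have hl : (w.head :: w.tail) = (w'.head :: w'.tail) :=
      List.map_injective_iff.mpr convL_injective h2
    cases w; cases w'
    simp only [List.cons.injEq] at hl
    obtain ⟨hh, ht⟩ := hl
    subst hh; subst ht; rfl

/-- The tuple with `fvec f` in position `k` and `0` elsewhere. -/
def eTup (k : Fin r) (f : FBasis (Fin r × Fin r × L)) : FockR r (Fin r × Fin r × L) :=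
  tupOf (fun j => if j = k then fvec f else 0)

lemma tupComp_eTup (k : Fin r) (f : FBasis (Fin r × Fin r × L)) (j : Fin r) :
    tupComp (eTup k f) j = if j = k then fvec f else 0 := rfl

lemma tupComp_zero {I : Type*} (k : Fin r) : tupComp (0 : FockR r I) k = 0 := rfl

lemma fock_ext {I : Type*} {ξ η : FockR r I} (h : ∀ k, tupComp ξ k = tupComp η k) : ξ = η :=
  (WithLp.equiv 2 _).injective (funext h)

lemma inner_fvec {I : Type*} (a b : FBasis I) :
    (inner ℂ (fvec a) (fvec b) : ℂ) = if a = b then 1 else 0 := by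
  classical
  have ha : (fvec a : FSpace I) = lp.single 2 a 1 := rfl
  have hb : (fvec b : FSpace I) = lp.single 2 b 1 := rfl
  rw [ha, hb, lp.inner_single_left]
  by_cases h : a = b
  · subst h
    simp [lp.single_apply_self, RCLike.inner_apply]
  · rw [lp.single_apply_ne 2 b 1 h]
    simp [RCLike.inner_apply, if_neg h]

lemma inner_eTup (k k' : Fin r) (f f' : FBasis (Fin r × Fin r × L)) :
    (inner ℂ (eTup k f) (eTup k' f') : ℂ) = if (k, f) = (k', f') then 1 else 0 := by
  classical
  rw [PiLp.inner_apply]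
  have hcomp : ∀ j : Fin r,
      (inner ℂ ((eTup k f) j) ((eTup k' f') j) : ℂ) =
        if j = k ∧ j = k' then (if f = f' then 1 else 0) else 0 := by
    intro j
    have h1 : (eTup k f) j = if j = k then fvec f else 0 := rfl
    have h2 : (eTup k' f') j = if j = k' then fvec f' else 0 := rfl
    rw [h1, h2]
    rcases eq_or_ne j k with rfl | hk1
    · rcases eq_or_ne j k' with rfl | hk2
      · simp [inner_fvec]
      · simp [hk2]
    · simp [hk1]
  simp_rw [hcomp]
  by_cases hk : k = k'
  · subst hk
    rw [Finset.sum_eq_single k]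
    · simp [Prod.ext_iff]
    · intro j _ hj; simp [hj]
    · simp
  · rw [Finset.sum_eq_zero, if_neg (by simp [Prod.ext_iff, hk])]
    intro j _
    rw [if_neg]
    rintro ⟨rfl, rfl⟩
    exact hk rfl

/-- The orthonormal family realizing the matricial basis inside `F^{⊕r}`. -/
def uVec (i : MBasis r (Set.univ) L) : FockR r (Fin r × Fin r × L) :=
  eTup (embB i).1 (embB i).2

lemma orthonormal_uVec : Orthonormal ℂ (uVec (r := r) (L := L)) := by
  classical
  rw [orthonormal_iff_ite]
  intro i j
  rw [uVec, uVec, inner_eTup]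
  by_cases h : i = j
  · subst h; simp
  · rw [if_neg h, if_neg]
    intro he
    exact h (embB_injective (by rwa [Prod.ext_iff] at he ⊢))

instance fockComplete {I : Type*} : CompleteSpace (FockR r I) :=
  inferInstance

instance fockT2 {I : Type*} : T2Space (FockR r I) :=
  inferInstance

lemma uVec_inl (q : Fin r) :
    (uVec (Sum.inl q) : FockR r (Fin r × Fin r × L)) = eTup q (Sum.inl ()) := rfl

lemma uVec_inr (w : MWord r (Set.univ) L) :
    (uVec (Sum.inr w) : FockR r (Fin r × Fin r × L)) =
      eTup w.head.1.1 (Sum.inr ⟨listOf w, listOf_ne_nil w⟩) := rfl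

/-- The isometry `τ`. -/
def tau (r : ℕ) (L : Type) :
    MSpace r (Set.univ) L →ₗᵢ[ℂ] FockR r (Fin r × Fin r × L) :=
  (orthonormal_uVec (r := r) (L := L)).orthogonalFamily.linearIsometry

lemma mvec_eq {J : Set (Fin r × Fin r)} (i : MBasis r J L) :
    (mvec i : MSpace r J L) = lp.single 2 i 1 := by
  rw [mvec]

lemma tau_mvec (i : MBasis r (Set.univ) L) : tau r L (mvec i) = uVec i := by
  rw [mvec_eq, tau,
    (orthonormal_uVec (r := r) (L := L)).orthogonalFamily.linearIsometry_apply_single (1 : ℂ),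
    LinearIsometry.toSpanSingleton_apply, one_smul]

end MFAux

end AuxMF

/-- with `J = [r]×[r]` and all covariances equal to `1`, there is a linear
isometry `τ : M → F^{⊕r}` sending `Ω_q` to the tuple `δ^{(q)}` and intertwining each
matricially free creation operator `℘_{p,q}(l)` with the matrix-style operator
`L_{p,q}(l) = ℓ(p,q,l) ⊗ e(p,q)` on `F^{⊕r}`. -/
theorem mfCreation_matricial_realization
    (r : ℕ) (hr : 1 ≤ r) (L : Type) [Finite L]
    (C : (p q : Fin r) → L → (MSpace r (Set.univ) L →L[ℂ] MSpace r (Set.univ) L))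
    (hC : ∀ p q l, IsMFCreation 1 p q l (Set.mem_univ _) (C p q l))
    (ell : (Fin r × Fin r × L) →
      (FSpace (Fin r × Fin r × L) →L[ℂ] FSpace (Fin r × Fin r × L)))
    (hell : ∀ i, IsFreeCreation i (ell i))
    (Lop : (p q : Fin r) → L → (FockR r (Fin r × Fin r × L) →L[ℂ] FockR r (Fin r × Fin r × L)))
    (hLop : ∀ p q l ξ k,
      tupComp (Lop p q l ξ) k = if k = p then (ell (p, q, l)) (tupComp ξ q) else 0) :
    ∃ τ : MSpace r (Set.univ) L →ₗᵢ[ℂ] FockR r (Fin r × Fin r × L),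
      (∀ q : Fin r, τ (vac q) = fockDelta q) ∧
      (∀ (p q : Fin r) (l : L) (x : MSpace r (Set.univ) L),
        τ ((C p q l) x) = (Lop p q l) (τ x)) := by
  classical
  open MFAux in
  refine ⟨tau r L, fun q => ?_, fun p q l x => ?_⟩
  · rw [vac, tau_mvec]
    rfl
  · obtain ⟨hC1, hC2, hC3, hC4⟩ := hC p q l
    have hsqrt : ((Real.sqrt 1 : ℝ) : ℂ) = 1 := by rw [Real.sqrt_one]; norm_num
    have key : ∀ i : MBasis r (Set.univ) L,
        tau r L ((C p q l) (mvec i)) = (Lop p q l) (tau r L (mvec i)) := by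
      rintro (q' | w)
      · by_cases hq : q' = q
        · subst hq
          have hc : (C p q' l) (mvec (Sum.inl q')) =
              wvec (MWord.single ((p, q'), l) (Set.mem_univ _)) := by
            rw [show mvec (Sum.inl q') = vac q' from rfl, hC1, hsqrt, one_smul]
          rw [hc, show wvec (MWord.single ((p, q'), l) (Set.mem_univ _)) =
              mvec (Sum.inr (MWord.single ((p, q'), l) (Set.mem_univ _))) from rfl,
            tau_mvec, tau_mvec]
          refine fock_ext fun k => ?_
          rw [hLop, uVec_inl, uVec_inr, tupComp_eTup, tupComp_eTup, if_pos rfl,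
            show (fvec (Sum.inl ()) : FSpace (Fin r × Fin r × L)) = fvac from rfl,
            (hell (p, q', l)).1]
          rfl
        · have hc : (C p q l) (mvec (Sum.inl q')) = 0 := hC2 q' hq
          rw [hc, map_zero, tau_mvec]
          refine (fock_ext fun k => ?_).symm
          rw [hLop, uVec_inl, tupComp_eTup,
            if_neg (show ¬q = q' from fun h => hq h.symm), map_zero, ite_self, tupComp_zero]
      · by_cases hq : w.head.1.1 = q
        · have hc : (C p q l) (mvec (Sum.inr w)) =
              wvec (MWord.cons ((p, q), l) (Set.mem_univ _) w hq.symm) := by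
            rw [show mvec (Sum.inr w) = wvec w from rfl, hC3 w hq, hsqrt, one_smul]
          rw [hc, show wvec (MWord.cons ((p, q), l) (Set.mem_univ _) w hq.symm) =
              mvec (Sum.inr (MWord.cons ((p, q), l) (Set.mem_univ _) w hq.symm)) from rfl,
            tau_mvec, tau_mvec]
          refine fock_ext fun k => ?_
          rw [hLop, uVec_inr, uVec_inr, tupComp_eTup, tupComp_eTup, if_pos hq.symm,
            show (fvec (Sum.inr ⟨listOf w, listOf_ne_nil w⟩) : FSpace (Fin r × Fin r × L)) =
              fword (listOf w) (listOf_ne_nil w) from rfl,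
            (hell (p, q, l)).2 (listOf w) (listOf_ne_nil w)]
          rfl
        · have hc : (C p q l) (mvec (Sum.inr w)) = 0 := hC4 w hq
          rw [hc, map_zero, tau_mvec]
          refine (fock_ext fun k => ?_).symm
          rw [hLop, uVec_inr, tupComp_eTup,
            if_neg (show ¬q = w.head.1.1 from fun h => hq h.symm), map_zero, ite_self,
            tupComp_zero]
    have hxsum : HasSum (fun i : MBasis r (Set.univ) L => lp.single 2 i (x i)) x :=
      lp.hasSum_single (by norm_num) x
    have hA : HasSum
        (fun i : MBasis r (Set.univ) L => tau r L ((C p q l) (lp.single 2 i (x i))))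
        (tau r L ((C p q l) x)) :=
      ((tau r L).toContinuousLinearMap.comp (C p q l)).hasSum hxsum
    have hB : HasSum
        (fun i : MBasis r (Set.univ) L => (Lop p q l) (tau r L (lp.single 2 i (x i))))
        ((Lop p q l) (tau r L x)) :=
      ((Lop p q l).comp (tau r L).toContinuousLinearMap).hasSum hxsum
    refine hA.unique (HasSum.congr_fun hB fun i => ?_)
    have hsm : (lp.single 2 i (x i) : MSpace r (Set.univ) L) = x i • mvec i := by
      rw [mvec_eq, ← lp.single_smul, smul_eq_mul, mul_one]
    rw [hsm, map_smul, map_smul, map_smul, map_smul, key i]
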